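/- In the travelling-wave Bäcklund setup, assume moreover that λ·w'(α) − sin w(α) ≠ 0 for all α and that b : ℝ → ℝ satisfies b'(α) = (λ w'(α) + sin w(α)) / (λ w'(α) − sin w(α)). Then for any real constant K the function δ(α,β) := f(α)/(a(α)k²) + (c/(a(α)k)) · tanh(c(β + b(α) + K)) satisfies the partial differential equation δ_α = [ (δ² − 1) sin w + 2δ(cos w + λ²/k) + λ(δ² + 1) w' ] / (4λ), where w, w' are evaluated at α. -/

import Mathlib

/-- First partial derivative (w.r.t. the first variable) of a curried function of two
real variables. -/
noncomputable def pd1 (f : ℝ → ℝ → ℝ) (x y : ℝ) : ℝ := deriv (fun x' => f x' y) x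

/-- Second partial derivative (w.r.t. the second variable). -/
noncomputable def pd2 (f : ℝ → ℝ → ℝ) (x y : ℝ) : ℝ := deriv (fun y' => f x y') y

lemma hasDerivAt_tanh' (x : ℝ) : HasDerivAt Real.tanh (1 - Real.tanh x ^ 2) x := by
  have hc := (Real.cosh_pos x).ne'
  have h : HasDerivAt (fun y => Real.sinh y / Real.cosh y)
      ((Real.cosh x * Real.cosh x - Real.sinh x * Real.sinh x) / Real.cosh x ^ 2) x :=
    (Real.hasDerivAt_sinh x).div (Real.hasDerivAt_cosh x) hc
  have e : (fun y => Real.sinh y / Real.cosh y) = Real.tanh :=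
    funext fun y => (Real.tanh_eq_sinh_div_cosh y).symm
  rw [e] at h
  convert h using 1
  rw [Real.tanh_eq_sinh_div_cosh]
  field_simp

set_option maxHeartbeats 4000000 in
/-- In the travelling-wave Bäcklund setup, if moreover
`b' = (λw' + sin w)/(λw' − sin w)`, then the ansatz
`δ(α,β) = f(α)/(a(α)k²) + (c/(a(α)k)) tanh(c(β + b(α) + K))`
satisfies the α-equation of the Bäcklund system:
`δ_α = [(δ² − 1) sin w + 2δ(cos w + λ²/k) + λ(δ² + 1) w'] / (4λ)`. -/
theorem delta_alpha_equation (k lam l K : ℝ) (hk : k ≠ 0) (hlam : lam ≠ 0)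
    (w : ℝ → ℝ) (hw : Differentiable ℝ w) (hw' : Differentiable ℝ (deriv w))
    (hode : ∀ α : ℝ, k * deriv (deriv w) α = Real.sin (w α))
    (hfi : ∀ α : ℝ, k * (deriv w α) ^ 2 = 2 * l - 2 * Real.cos (w α))
    (hdisc : lam ^ 4 - 2 * k * l * lam ^ 2 + k ^ 2 > 0)
    (a f : ℝ → ℝ) (c : ℝ)
    (ha : ∀ α : ℝ, a α = Real.sin (w α) / (4 * k * lam) - deriv w α / (4 * k))
    (hf : ∀ α : ℝ, f α = lam / 4 - k * Real.cos (w α) / (4 * lam))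
    (hc : c = Real.sqrt (lam ^ 4 - 2 * k * l * lam ^ 2 + k ^ 2) / (4 * k * lam))
    (ha0 : ∀ α : ℝ, a α ≠ 0)
    (hne : ∀ α : ℝ, lam * deriv w α - Real.sin (w α) ≠ 0)
    (b : ℝ → ℝ) (hb : Differentiable ℝ b)
    (hb' : ∀ α : ℝ, deriv b α
      = (lam * deriv w α + Real.sin (w α)) / (lam * deriv w α - Real.sin (w α)))
    (δ : ℝ → ℝ → ℝ)
    (hδ : ∀ α β : ℝ, δ α β
      = f α / (a α * k ^ 2) + (c / (a α * k)) * Real.tanh (c * (β + b α + K))) :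
    ∀ α β : ℝ, pd1 δ α β
      = (((δ α β) ^ 2 - 1) * Real.sin (w α)
          + 2 * δ α β * (Real.cos (w α) + lam ^ 2 / k)
          + lam * ((δ α β) ^ 2 + 1) * deriv w α) / (4 * lam) := by
  intro α β
  have haf : a = fun x => Real.sin (w x) / (4 * k * lam) - deriv w x / (4 * k) := funext ha
  have hff : f = fun x => lam / 4 - k * Real.cos (w x) / (4 * lam) := funext hf
  have hwd : HasDerivAt w (deriv w α) α := (hw α).hasDerivAt
  have hw2 : HasDerivAt (deriv w) (Real.sin (w α) / k) α := by
    have h := (hw' α).hasDerivAt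
    have e : deriv (deriv w) α = Real.sin (w α) / k := by
      field_simp
      linear_combination hode α
    rwa [e] at h
  have hA : HasDerivAt a
      (Real.cos (w α) * deriv w α / (4 * k * lam) - Real.sin (w α) / k / (4 * k)) α := by
    rw [haf]
    exact (hwd.sin.div_const (4 * k * lam)).sub (hw2.div_const (4 * k))
  have hF : HasDerivAt f (0 - k * (-Real.sin (w α) * deriv w α) / (4 * lam)) α := by
    rw [hff]
    exact (hasDerivAt_const α (lam / 4)).sub ((hwd.cos.const_mul k).div_const (4 * lam))
  have hden1 : a α * k ^ 2 ≠ 0 := mul_ne_zero (ha0 α) (pow_ne_zero 2 hk)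
  have hden2 : a α * k ≠ 0 := mul_ne_zero (ha0 α) hk
  have hq1 := hF.div (hA.mul_const (k ^ 2)) hden1
  have hu : HasDerivAt (fun x => c * (β + b x + K)) (c * deriv b α) α :=
    (((hb α).hasDerivAt.const_add β).add_const K).const_mul c
  have hT : HasDerivAt (fun x => Real.tanh (c * (β + b x + K)))
      ((1 - Real.tanh (c * (β + b α + K)) ^ 2) * (c * deriv b α)) α :=
    by have := (hasDerivAt_tanh' (c * (β + b α + K))).comp α hu; exact this
  have hq2 := ((hasDerivAt_const α c).div (hA.mul_const k) hden2).mul hT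
  have htot := hq1.add hq2
  have hfun : (fun x => δ x β)
      = fun x => f x / (a x * k ^ 2) + c / (a x * k) * Real.tanh (c * (β + b x + K)) :=
    funext fun x => hδ x β
  show deriv (fun x' => δ x' β) α = _
  rw [hfun, (show HasDerivAt (fun x => f x / (a x * k ^ 2) + c / (a x * k) * Real.tanh (c * (β + b x + K))) _ α from htot).deriv, Pi.div_apply, hδ α β]
  beta_reduce
  -- now pure algebra
  have hC : Real.cos (w α) = l - k * (deriv w α) ^ 2 / 2 := by linarith [hfi α]
  have hS : Real.sin (w α) ^ 2 = 1 - (l - k * (deriv w α) ^ 2 / 2) ^ 2 := by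
    have h := Real.sin_sq_add_cos_sq (w α)
    rw [hC] at h
    linarith
  have hr : Real.sqrt (lam ^ 4 - 2 * k * l * lam ^ 2 + k ^ 2) ^ 2
      = lam ^ 4 - 2 * k * l * lam ^ 2 + k ^ 2 := Real.sq_sqrt hdisc.le
  have ha0' : Real.sin (w α) / (4 * k * lam) - deriv w α / (4 * k) ≠ 0 := by
    rw [← ha α]; exact ha0 α
  have hne' : lam * deriv w α - Real.sin (w α) ≠ 0 := hne α
  have hne2 : Real.sin (w α) - lam * deriv w α ≠ 0 := by
    intro h; exact hne α (by linarith)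
  set T := Real.tanh (c * (β + b α + K)) with hTdef
  rw [hb' α, hf α, ha α, hC, hc]
  set S := Real.sin (w α) with hSdef
  set W := deriv w α with hWdef
  set r := Real.sqrt (lam ^ 4 - 2 * k * l * lam ^ 2 + k ^ 2) with hrdef
  clear_value T S W r
  have e : S / (4 * k * lam) - W / (4 * k) = (S - lam * W) / (4 * k * lam) := by
    field_simp
  rw [e]
  have key : 4*lam*(k^2*S*W*(S - lam*W) - (lam^2 - k*(l - k*W^2/2))*(k*(l - k*W^2/2)*W - S*lam))
        - 4*lam*T*r*(k*(l - k*W^2/2)*W - S*lam) - r^2*(1 - T^2)*(lam*W + S)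
      = ((lam^2 - k*(l - k*W^2/2) + r*T)^2 - k^2*(S - lam*W)^2)*S
        + 2*(lam^2 - k*(l - k*W^2/2) + r*T)*(S - lam*W)*(k*(l - k*W^2/2) + lam^2)
        + lam*((lam^2 - k*(l - k*W^2/2) + r*T)^2 + k^2*(S - lam*W)^2)*W := by
    linear_combination (k^2*lam*W + k^2*S) * hS - (lam*W + S) * hr
  have eL : ((0 - k * (-S * W) / (4 * lam)) * ((S - lam * W) / (4 * k * lam) * k ^ 2) -
          (lam / 4 - k * (l - k * W ^ 2 / 2) / (4 * lam)) *
            (((l - k * W ^ 2 / 2) * W / (4 * k * lam) - S / k / (4 * k)) * k ^ 2)) /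
        ((S - lam * W) / (4 * k * lam) * k ^ 2) ^ 2 +
      ((0 * ((S - lam * W) / (4 * k * lam) * k) -
              r / (4 * k * lam) * (((l - k * W ^ 2 / 2) * W / (4 * k * lam) - S / k / (4 * k)) * k)) /
            ((S - lam * W) / (4 * k * lam) * k) ^ 2 *
          T +
        r / (4 * k * lam) / ((S - lam * W) / (4 * k * lam) * k) *
          ((1 - T ^ 2) * (r / (4 * k * lam) * ((lam * W + S) / (lam * W - S)))))
      = (4*lam*(k^2*S*W*(S - lam*W) - (lam^2 - k*(l - k*W^2/2))*(k*(l - k*W^2/2)*W - S*lam))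
        - 4*lam*T*r*(k*(l - k*W^2/2)*W - S*lam) - r^2*(1 - T^2)*(lam*W + S))
        / (4*k^2*lam*(S - lam*W)^2) := by
    have e2 : lam * W - S = -(S - lam * W) := by ring
    rw [e2]
    field_simp
    ring
  have eR : ((((lam / 4 - k * (l - k * W ^ 2 / 2) / (4 * lam)) / ((S - lam * W) / (4 * k * lam) * k ^ 2) +
                  r / (4 * k * lam) / ((S - lam * W) / (4 * k * lam) * k) * T) ^
                2 -
              1) *
            S +
          2 *
              ((lam / 4 - k * (l - k * W ^ 2 / 2) / (4 * lam)) / ((S - lam * W) / (4 * k * lam) * k ^ 2) +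
                r / (4 * k * lam) / ((S - lam * W) / (4 * k * lam) * k) * T) *
            (l - k * W ^ 2 / 2 + lam ^ 2 / k) +
        lam *
            (((lam / 4 - k * (l - k * W ^ 2 / 2) / (4 * lam)) / ((S - lam * W) / (4 * k * lam) * k ^ 2) +
                  r / (4 * k * lam) / ((S - lam * W) / (4 * k * lam) * k) * T) ^
                2 +
              1) *
          W) /
      (4 * lam)
      = (((lam^2 - k*(l - k*W^2/2) + r*T)^2 - k^2*(S - lam*W)^2)*S
        + 2*(lam^2 - k*(l - k*W^2/2) + r*T)*(S - lam*W)*(k*(l - k*W^2/2) + lam^2)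
        + lam*((lam^2 - k*(l - k*W^2/2) + r*T)^2 + k^2*(S - lam*W)^2)*W)
        / (4*k^2*lam*(S - lam*W)^2) := by
    field_simp
  rw [eL, eR, key]
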